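/- Let N ≥ 2, λ0 > 0, λ1 > 0 and y ∈ ℝ^N. Let t ∈ ℝ^N be the (unique) minimizer over x ∈ ℝ^N of the total variation denoising objective (1/2)‖y − x‖₂² + λ1·‖Dx‖₁. Then the vector x* ∈ ℝ^N obtained by applying the soft-threshold function with threshold λ0 elementwise to t, i.e., x*_n = soft(t_n; λ0), is a minimizer over x ∈ ℝ^N of the ℓ1 fused lasso signal approximation objective (1/2)‖y − x‖₂² + λ0·‖x‖₁ + λ1·‖Dx‖₁. -/

import Mathlib

/-- The soft-threshold function with threshold `lam`. -/
noncomputable def soft (x lam : ℝ) : ℝ :=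
  if x < -lam then x + lam else if x ≤ lam then 0 else x - lam

lemma real1 (C S : ℝ) (hC : 0 < C) (h : ∀ ε : ℝ, ε ≠ 0 → 0 < ε * S + C * ε ^ 2) :
    S = 0 := by
  by_contra hS
  have hne : -S / (2 * C) ≠ 0 := by
    simp only [ne_eq, div_eq_zero_iff, neg_eq_zero]
    push_neg
    exact ⟨hS, by positivity⟩
  have h1 := h (-S / (2 * C)) hne
  have h4 : (-S / (2 * C)) * (2 * C) = -S := by field_simp
  nlinarith [sq_nonneg S]

lemma real2a (C lam σ d : ℝ) (hC : 0 < C) (hlam : 0 < lam)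
    (h : ∀ ε : ℝ, ε ≠ 0 → 0 < ε * σ + C * ε ^ 2 + lam * (|d - ε| - |d|)) :
    σ ≤ lam := by
  by_contra hσ
  push_neg at hσ
  set ε := -(σ - lam) / (2 * C) with hε
  have hεneg : ε < 0 := by
    apply div_neg_of_neg_of_pos <;> nlinarith
  have h1 := h ε hεneg.ne
  have h2 : |d - ε| - |d| ≤ |ε| := by
    have := abs_sub_abs_le_abs_sub (d - ε) d
    simpa using this
  have h3 : |ε| = -ε := abs_of_neg hεneg
  have h4 : ε * (2 * C) = -(σ - lam) := by
    rw [hε]; field_simp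
  nlinarith [sq_nonneg ε]

lemma real2b (C lam σ d : ℝ) (hC : 0 < C) (hlam : 0 < lam) (hd : 0 < d)
    (h : ∀ ε : ℝ, ε ≠ 0 → 0 < ε * σ + C * ε ^ 2 + lam * (|d - ε| - |d|)) :
    σ = lam := by
  by_contra hσ
  have key : ∀ ε : ℝ, ε ≠ 0 → ε ≤ d → 0 < ε * (σ - lam) + C * ε ^ 2 := by
    intro ε hne hle
    have h1 := h ε hne
    have h2 : |d - ε| = d - ε := abs_of_nonneg (by linarith)
    have h3 : |d| = d := abs_of_pos hd
    rw [h2, h3] at h1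
    nlinarith
  have ha : σ - lam ≠ 0 := sub_ne_zero.mpr hσ
  by_cases hcase : -(σ - lam) / (2 * C) ≤ d
  · have hne : -(σ - lam) / (2 * C) ≠ 0 := by
      simp only [ne_eq, div_eq_zero_iff, neg_eq_zero]
      push_neg
      exact ⟨ha, by positivity⟩
    have h1 := key _ hne hcase
    have h4 : (-(σ - lam) / (2 * C)) * (2 * C) = -(σ - lam) := by
      field_simp
    nlinarith [sq_nonneg (σ - lam)]
  · push_neg at hcase
    have h1 := key d hd.ne' le_rfl
    have h5 : d * (2 * C) < -(σ - lam) :=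
      (lt_div_iff₀ (by positivity : (0:ℝ) < 2 * C)).mp hcase
    nlinarith [sq_nonneg d]

lemma real2b' (C lam σ d : ℝ) (hC : 0 < C) (hlam : 0 < lam) (hd : d < 0)
    (h : ∀ ε : ℝ, ε ≠ 0 → 0 < ε * σ + C * ε ^ 2 + lam * (|d - ε| - |d|)) :
    σ = -lam := by
  have := real2b C lam (-σ) (-d) hC hlam (by linarith) (fun ε hε => by
    have h1 := h (-ε) (neg_ne_zero.mpr hε)
    have h2 : |d - -ε| = |-d - ε| := by
      rw [show d - -ε = -(-d - ε) by ring, abs_neg]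
    have h3 : |d| = |-d| := (abs_neg d).symm
    calc (0:ℝ) < (-ε) * σ + C * (-ε) ^ 2 + lam * (|d - -ε| - |d|) := h1
    _ = ε * (-σ) + C * ε ^ 2 + lam * (|-d - ε| - |-d|) := by rw [h2, h3]; ring)
  linarith

lemma real2a' (C lam σ d : ℝ) (hC : 0 < C) (hlam : 0 < lam)
    (h : ∀ ε : ℝ, ε ≠ 0 → 0 < ε * σ + C * ε ^ 2 + lam * (|d - ε| - |d|)) :
    |σ| ≤ lam := by
  rw [abs_le]
  refine ⟨?_, real2a C lam σ d hC hlam h⟩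
  have := real2a C lam (-σ) (-d) hC hlam (fun ε hε => by
    have h1 := h (-ε) (neg_ne_zero.mpr hε)
    have h2 : |d - -ε| = |-d - ε| := by
      rw [show d - -ε = -(-d - ε) by ring, abs_neg]
    have h3 : |d| = |-d| := (abs_neg d).symm
    calc (0:ℝ) < (-ε) * σ + C * (-ε) ^ 2 + lam * (|d - -ε| - |d|) := h1
    _ = ε * (-σ) + C * ε ^ 2 + lam * (|-d - ε| - |-d|) := by rw [h2, h3]; ring)
  linarith

lemma soft_abs_sub (a lam : ℝ) (h : 0 ≤ lam) : |a - soft a lam| ≤ lam := by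
  unfold soft
  split_ifs with h1 h2 <;> rw [abs_le] <;> constructor <;> linarith

lemma soft_mul (a lam : ℝ) : (a - soft a lam) * soft a lam = lam * |soft a lam| := by
  unfold soft
  split_ifs with h1 h2
  · rw [abs_of_neg (by linarith : a + lam < 0)]; ring
  · simp
  · rw [abs_of_pos (by push_neg at h1 h2; linarith : (0:ℝ) < a - lam)]; ring

lemma soft_mono (lam : ℝ) {a b : ℝ} (hab : a ≤ b) : soft a lam ≤ soft b lam := by
  unfold soft
  split_ifs <;> linarith

lemma pointC1 (lam0 Y X a : ℝ) (h : 0 < lam0) :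
    (1/2) * (Y - soft a lam0) ^ 2 + lam0 * |soft a lam0| + (a - Y) * (X - soft a lam0)
      ≤ (1/2) * (Y - X) ^ 2 + lam0 * |X| := by
  set w := soft a lam0 with hw
  have h1 : (a - w) * X ≤ lam0 * |X| := by
    calc (a - w) * X ≤ |(a - w) * X| := le_abs_self _
    _ = |a - w| * |X| := abs_mul _ _
    _ ≤ lam0 * |X| := mul_le_mul_of_nonneg_right (soft_abs_sub a lam0 h.le) (abs_nonneg _)
  have h2 := soft_mul a lam0
  nlinarith [sq_nonneg (X - w)]

lemma pointC2 (lam1 σ t1 t2 w1 w2 X : ℝ)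
    (habs : |σ| ≤ lam1) (hp : t1 < t2 → σ = lam1) (hm : t2 < t1 → σ = -lam1)
    (hw1 : w2 < w1 → t2 < t1) (hw2 : w1 < w2 → t1 < t2) :
    lam1 * |w2 - w1| + σ * (X - (w2 - w1)) ≤ lam1 * |X| := by
  have hX : σ * X ≤ lam1 * |X| := by
    calc σ * X ≤ |σ * X| := le_abs_self _
    _ = |σ| * |X| := abs_mul _ _
    _ ≤ lam1 * |X| := mul_le_mul_of_nonneg_right habs (abs_nonneg _)
  have hW : σ * (w2 - w1) = lam1 * |w2 - w1| := by
    rcases lt_trichotomy w1 w2 with hlt | heq | hgt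
    · rw [hp (hw2 hlt), abs_of_pos (by linarith)]
    · rw [heq]; simp
    · rw [hm (hw1 hgt), abs_of_neg (by linarith)]; ring
  nlinarith

lemma abel_sum (G V : ℕ → ℝ) (N : ℕ) :
    ∑ n ∈ Finset.range (N+1), G n * V n
      = ∑ j ∈ Finset.range N, (∑ k ∈ Finset.range (j+1), G k) * (V j - V (j+1))
        + (∑ k ∈ Finset.range (N+1), G k) * V N := by
  induction N with
  | zero => simp
  | succ m ih =>
    rw [Finset.sum_range_succ (fun n => G n * V n), ih,
        Finset.sum_range_succ (fun j => (∑ k ∈ Finset.range (j+1), G k) * (V j - V (j+1))),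
        Finset.sum_range_succ G (m+1)]
    ring

lemma Iic_sum_eq (N : ℕ) (c : Fin (N+1)) (f : Fin (N+1) → ℝ) :
    ∑ k ∈ Finset.Iic c, f k = ∑ k : Fin (N+1), if k ≤ c then f k else 0 := by
  rw [← Finset.sum_filter]
  congr 1
  ext k; simp

lemma key_ineq (N : ℕ) (lam1 : ℝ) (y t : Fin (N + 1) → ℝ)
    (ht : ∀ x : Fin (N + 1) → ℝ, x ≠ t →
      (1 / 2) * ∑ n, (y n - t n) ^ 2
          + lam1 * ∑ i : Fin N, |t i.succ - t i.castSucc|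
        < (1 / 2) * ∑ n, (y n - x n) ^ 2
          + lam1 * ∑ i : Fin N, |x i.succ - x i.castSucc|)
    (c : Fin (N+1)) (ε : ℝ) (hε : ε ≠ 0) :
    0 < ε * (∑ k ∈ Finset.Iic c, (t k - y k)) + ((Finset.Iic c).card : ℝ) * ε ^ 2 / 2
      + lam1 * ((∑ i : Fin N, |(t i.succ + if i.succ ≤ c then ε else 0)
            - (t i.castSucc + if i.castSucc ≤ c then ε else 0)|)
          - ∑ i : Fin N, |t i.succ - t i.castSucc|) := by
  set x : Fin (N+1) → ℝ := fun k => t k + if k ≤ c then ε else 0 with hx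
  have hne : x ≠ t := by
    intro h
    have h0 := congrFun h 0
    simp only [hx, Fin.zero_le, if_pos] at h0
    exact hε (by linarith)
  have hq := ht x hne
  have hsq : ∑ n, (y n - x n) ^ 2
      = (∑ n, (y n - t n) ^ 2) + (2 * ε * (∑ k ∈ Finset.Iic c, (t k - y k))
          + ((Finset.Iic c).card : ℝ) * ε ^ 2) := by
    have e1 : ∀ n : Fin (N+1), (y n - x n) ^ 2
        = (y n - t n) ^ 2 + (if n ≤ c then (2 * ε * (t n - y n) + ε ^ 2) else 0) := by
      intro n
      simp only [hx]
      split_ifs <;> ring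
    rw [Finset.sum_congr rfl (fun n _ => e1 n), Finset.sum_add_distrib]
    congr 1
    rw [← Finset.sum_filter]
    have e2 : Finset.filter (fun k => k ≤ c) Finset.univ = Finset.Iic c := by
      ext k; simp
    rw [e2, Finset.sum_add_distrib, Finset.sum_const, ← Finset.mul_sum]
    simp [mul_comm]
  rw [hsq] at hq
  have hxd : ∀ i : Fin N, x i.succ - x i.castSucc
      = (t i.succ + if i.succ ≤ c then ε else 0)
        - (t i.castSucc + if i.castSucc ≤ c then ε else 0) := fun i => rfl
  simp only [hxd] at hq
  linarith

lemma diff_sum (N : ℕ) (t : Fin (N+1) → ℝ) (j : Fin N) (ε : ℝ) :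
    (∑ i : Fin N, |(t i.succ + if i.succ ≤ j.castSucc then ε else 0)
        - (t i.castSucc + if i.castSucc ≤ j.castSucc then ε else 0)|)
      = (∑ i : Fin N, |t i.succ - t i.castSucc|)
        + (|t j.succ - t j.castSucc - ε| - |t j.succ - t j.castSucc|) := by
  have e : ∀ i : Fin N, |(t i.succ + if i.succ ≤ j.castSucc then ε else 0)
        - (t i.castSucc + if i.castSucc ≤ j.castSucc then ε else 0)|
      = |t i.succ - t i.castSucc|
        + (if i = j then (|t j.succ - t j.castSucc - ε| - |t j.succ - t j.castSucc|) else 0) := by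
    intro i
    simp only [Fin.le_def, Fin.val_succ, Fin.coe_castSucc]
    rcases eq_or_ne i j with h | hij
    · subst h
      rw [if_neg (by omega), if_pos (le_refl _), if_pos rfl]
      rw [show t i.succ + 0 - (t i.castSucc + ε) = t i.succ - t i.castSucc - ε by ring]
      ring
    · have hvij : (i : ℕ) ≠ (j : ℕ) := fun h => hij (Fin.ext h)
      rw [if_neg hij, add_zero]
      by_cases h2 : (i : ℕ) + 1 ≤ (j : ℕ)
      · rw [if_pos h2, if_pos (by omega)]
        congr 1; ring
      · rw [if_neg h2, if_neg (by omega)]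
        congr 1; ring
  rw [Finset.sum_congr rfl (fun i _ => e i), Finset.sum_add_distrib]
  congr 1
  rw [Finset.sum_ite_eq' Finset.univ j]
  simp

/-- **Lemma 1 (Friedman et al.).** Let `t` be the unique minimizer of the total
variation denoising objective `½‖y − x‖₂² + λ1‖Dx‖₁`.  Then the elementwise
soft-thresholding `x*ₙ = soft(tₙ; λ0)` of `t` minimizes the ℓ1 fused lasso
signal approximation objective `½‖y − x‖₂² + λ0‖x‖₁ + λ1‖Dx‖₁`.
Here `(Dx)ₙ = x_{n+1} − xₙ` and the signal length is `N + 1 ≥ 2`. -/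
theorem flsa_solution_soft_of_tvd (N : ℕ) (hN : 1 ≤ N)
    (lam0 lam1 : ℝ) (hlam0 : 0 < lam0) (hlam1 : 0 < lam1)
    (y t : Fin (N + 1) → ℝ)
    (ht : ∀ x : Fin (N + 1) → ℝ, x ≠ t →
      (1 / 2) * ∑ n, (y n - t n) ^ 2
          + lam1 * ∑ i : Fin N, |t i.succ - t i.castSucc|
        < (1 / 2) * ∑ n, (y n - x n) ^ 2
          + lam1 * ∑ i : Fin N, |x i.succ - x i.castSucc|) :
    ∀ x : Fin (N + 1) → ℝ,
      (1 / 2) * ∑ n, (y n - soft (t n) lam0) ^ 2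
          + lam0 * ∑ n, |soft (t n) lam0|
          + lam1 * ∑ i : Fin N, |soft (t i.succ) lam0 - soft (t i.castSucc) lam0|
        ≤ (1 / 2) * ∑ n, (y n - x n) ^ 2
          + lam0 * ∑ n, |x n|
          + lam1 * ∑ i : Fin N, |x i.succ - x i.castSucc| := by
  intro x
  classical
  set G : ℕ → ℝ := fun i => if h : i < N + 1 then t ⟨i, h⟩ - y ⟨i, h⟩ else 0 with hGdef
  set V : ℕ → ℝ := fun i => if h : i < N + 1 then x ⟨i, h⟩ - soft (t ⟨i, h⟩) lam0 else 0
    with hVdef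
  set σ : ℕ → ℝ := fun m => ∑ k ∈ Finset.range (m + 1), G k with hσdef
  have hσ : ∀ m, σ m = ∑ k ∈ Finset.range (m + 1), G k := fun m => by rw [hσdef]
  have hG : ∀ n : Fin (N + 1), G (n : ℕ) = t n - y n := by
    intro n
    rw [hGdef]
    simp only [n.isLt, dif_pos, Fin.eta]
  have hV : ∀ n : Fin (N + 1), V (n : ℕ) = x n - soft (t n) lam0 := by
    intro n
    rw [hVdef]
    simp only [n.isLt, dif_pos, Fin.eta]
  -- Iic sums as partial sums
  have hIic : ∀ c : Fin (N + 1), (∑ k ∈ Finset.Iic c, (t k - y k)) = σ (c : ℕ) := by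
    intro c
    rw [Iic_sum_eq, hσ]
    have e1 : ∀ k : Fin (N + 1), (if k ≤ c then (t k - y k) else 0)
        = if (k : ℕ) ≤ (c : ℕ) then G (k : ℕ) else 0 := by
      intro k
      by_cases hk : (k : ℕ) ≤ (c : ℕ)
      · rw [if_pos hk, if_pos (Fin.le_def.mpr hk), hG k]
      · rw [if_neg hk, if_neg (fun hc => hk (Fin.le_def.mp hc))]
    rw [Finset.sum_congr rfl (fun k _ => e1 k),
      Fin.sum_univ_eq_sum_range (fun i => if i ≤ (c : ℕ) then G i else 0) (N + 1)]
    rw [← Finset.sum_subset (Finset.range_subset_range.mpr (by omega : (c : ℕ) + 1 ≤ N + 1))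
      (fun i _ hi => by rw [if_neg (by simp only [Finset.mem_range] at hi; omega)])]
    apply Finset.sum_congr rfl
    intro i hi
    rw [if_pos (by simp only [Finset.mem_range] at hi; omega)]
  have hkey := key_ineq N lam1 y t ht
  -- total sum vanishes
  have htot : σ N = 0 := by
    refine real1 (((N : ℝ) + 1) / 2) (σ N) (by positivity) ?_
    intro ε hε
    have h1 := hkey (Fin.last N) ε hε
    have h2 : (∑ i : Fin N, |(t i.succ + if i.succ ≤ Fin.last N then ε else 0)
          - (t i.castSucc + if i.castSucc ≤ Fin.last N then ε else 0)|)
        = ∑ i : Fin N, |t i.succ - t i.castSucc| := by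
      apply Finset.sum_congr rfl
      intro i _
      rw [if_pos (Fin.le_last _), if_pos (Fin.le_last _)]
      congr 1; ring
    rw [h2] at h1
    have h3 : Finset.Iic (Fin.last N) = Finset.univ := by
      ext k; simp [Fin.le_last]
    rw [h3] at h1
    have h4 : (∑ k : Fin (N + 1), (t k - y k)) = σ N := by
      have := hIic (Fin.last N)
      rw [h3] at this
      simpa using this
    rw [h4] at h1
    have h5 : ((Finset.univ : Finset (Fin (N + 1))).card : ℝ) = (N : ℝ) + 1 := by
      simp [Finset.card_univ]
    rw [h5] at h1
    nlinarith [h1]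
  -- per-difference key inequality
  have hj : ∀ j : Fin N, ∀ ε : ℝ, ε ≠ 0 →
      0 < ε * σ (j : ℕ) + (((Finset.Iic (j.castSucc)).card : ℝ) / 2) * ε ^ 2
        + lam1 * (|(t j.succ - t j.castSucc) - ε| - |t j.succ - t j.castSucc|) := by
    intro j ε hε
    have h1 := hkey j.castSucc ε hε
    rw [diff_sum, hIic j.castSucc, Fin.coe_castSucc] at h1
    have : (∑ i : Fin N, |t i.succ - t i.castSucc|)
        + (|t j.succ - t j.castSucc - ε| - |t j.succ - t j.castSucc|)
        - ∑ i : Fin N, |t i.succ - t i.castSucc|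
        = |t j.succ - t j.castSucc - ε| - |t j.succ - t j.castSucc| := by ring
    rw [this] at h1
    nlinarith [h1]
  have hCpos : ∀ j : Fin N, 0 < (((Finset.Iic (j.castSucc)).card : ℝ) / 2) := by
    intro j
    have : 0 < (Finset.Iic (j.castSucc)).card :=
      Finset.card_pos.mpr ⟨j.castSucc, Finset.mem_Iic.mpr le_rfl⟩
    positivity
  have habs : ∀ j : Fin N, |σ (j : ℕ)| ≤ lam1 := fun j =>
    real2a' _ lam1 _ (t j.succ - t j.castSucc) (hCpos j) hlam1 (hj j)
  have hp : ∀ j : Fin N, t j.castSucc < t j.succ → σ (j : ℕ) = lam1 := fun j hlt =>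
    real2b _ lam1 _ (t j.succ - t j.castSucc) (hCpos j) hlam1 (by linarith) (hj j)
  have hm : ∀ j : Fin N, t j.succ < t j.castSucc → σ (j : ℕ) = -lam1 := fun j hlt =>
    real2b' _ lam1 _ (t j.succ - t j.castSucc) (hCpos j) hlam1 (by linarith) (hj j)
  -- Abel summation
  have habel : ∑ n : Fin (N + 1), (t n - y n) * (x n - soft (t n) lam0)
      = ∑ j : Fin N, σ (j : ℕ)
          * ((x j.castSucc - soft (t j.castSucc) lam0) - (x j.succ - soft (t j.succ) lam0)) := by
    have e1 : ∀ n : Fin (N + 1), (t n - y n) * (x n - soft (t n) lam0)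
        = G (n : ℕ) * V (n : ℕ) := fun n => by rw [hG n, hV n]
    rw [Finset.sum_congr rfl (fun n _ => e1 n),
      Fin.sum_univ_eq_sum_range (fun i => G i * V i) (N + 1), abel_sum, ← hσ N, htot,
      zero_mul, add_zero]
    have e2 : ∀ j : Fin N, σ (j : ℕ)
          * ((x j.castSucc - soft (t j.castSucc) lam0) - (x j.succ - soft (t j.succ) lam0))
        = (∑ k ∈ Finset.range ((j : ℕ) + 1), G k) * (V (j : ℕ) - V ((j : ℕ) + 1)) := by
      intro j
      have ha : V (j : ℕ) = x j.castSucc - soft (t j.castSucc) lam0 := by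
        have := hV j.castSucc
        rwa [Fin.coe_castSucc] at this
      have hb : V ((j : ℕ) + 1) = x j.succ - soft (t j.succ) lam0 := by
        have := hV j.succ
        rwa [Fin.val_succ] at this
      rw [ha, hb, hσ]
    rw [Finset.sum_congr rfl (fun j _ => e2 j),
      Fin.sum_univ_eq_sum_range
        (fun i => (∑ k ∈ Finset.range (i + 1), G k) * (V i - V (i + 1))) N]
  -- summed pointwise inequalities
  have A1 : (1 / 2) * ∑ n, (y n - soft (t n) lam0) ^ 2 + lam0 * ∑ n, |soft (t n) lam0|
      + ∑ n, (t n - y n) * (x n - soft (t n) lam0)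
      ≤ (1 / 2) * ∑ n, (y n - x n) ^ 2 + lam0 * ∑ n, |x n| := by
    have h := Finset.sum_le_sum (s := Finset.univ)
      (f := fun n : Fin (N + 1) => (1 / 2) * (y n - soft (t n) lam0) ^ 2
        + lam0 * |soft (t n) lam0| + (t n - y n) * (x n - soft (t n) lam0))
      (g := fun n : Fin (N + 1) => (1 / 2) * (y n - x n) ^ 2 + lam0 * |x n|)
      (fun n _ => pointC1 lam0 (y n) (x n) (t n) hlam0)
    simp only [Finset.sum_add_distrib, ← Finset.mul_sum] at h
    exact h
  have A2 : lam1 * ∑ j : Fin N, |soft (t j.succ) lam0 - soft (t j.castSucc) lam0|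
      + ∑ j : Fin N, σ (j : ℕ) * ((x j.succ - x j.castSucc)
          - (soft (t j.succ) lam0 - soft (t j.castSucc) lam0))
      ≤ lam1 * ∑ j : Fin N, |x j.succ - x j.castSucc| := by
    have h := Finset.sum_le_sum (s := Finset.univ)
      (f := fun j : Fin N => lam1 * |soft (t j.succ) lam0 - soft (t j.castSucc) lam0|
        + σ (j : ℕ) * ((x j.succ - x j.castSucc)
          - (soft (t j.succ) lam0 - soft (t j.castSucc) lam0)))
      (g := fun j : Fin N => lam1 * |x j.succ - x j.castSucc|)
      (fun j _ => pointC2 lam1 (σ (j : ℕ)) (t j.castSucc) (t j.succ)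
        (soft (t j.castSucc) lam0) (soft (t j.succ) lam0) (x j.succ - x j.castSucc)
        (habs j) (hp j) (hm j)
        (fun hlt => by
          by_contra hcon
          push_neg at hcon
          exact absurd hlt (not_lt.mpr (soft_mono lam0 hcon)))
        (fun hlt => by
          by_contra hcon
          push_neg at hcon
          exact absurd hlt (not_lt.mpr (soft_mono lam0 hcon))))
    simp only [Finset.sum_add_distrib, ← Finset.mul_sum] at h
    exact h
  have habel2 : (∑ n : Fin (N + 1), (t n - y n) * (x n - soft (t n) lam0))
      + ∑ j : Fin N, σ (j : ℕ) * ((x j.succ - x j.castSucc)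
          - (soft (t j.succ) lam0 - soft (t j.castSucc) lam0)) = 0 := by
    rw [habel, ← Finset.sum_add_distrib]
    apply Finset.sum_eq_zero
    intro j _
    ring
  linarith [A1, A2, habel2]
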